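/- Let ‖·‖ be a norm on the vector space c₀₀(ω₁) of finitely supported real-valued functions on ω₁ which is bimonotone: ‖x·χ_I‖ ≤ ‖x‖ for every x ∈ c₀₀(ω₁) and every interval I of ω₁ (χ_I denotes the indicator function of I). Let C > 0, let k be a positive integer, and let y be a C-ℓ₁ᵏ-average: ‖y‖ = 1 and y = (x_0 + … + x_{k−1})/k for a block sequence (x_i)_{i<k} in c₀₀(ω₁) with ‖x_i‖ ≤ C for each i < k. Then for every positive integer l < k and every sequence of intervals E_0 < E_1 < … < E_{l−1} of ω₁ (every element of E_i is less than every element of E_j for i<j) one has ∑_{i<l} ‖y·χ_{E_i}‖ ≤ C(1 + 2l/k). -/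

import Mathlib

lemma my_support_sum_finite {α ι : Type*} (s : Finset ι) (f : ι → α → ℝ)
    (hf : ∀ j ∈ s, (Function.support (f j)).Finite) :
    (Function.support (∑ j ∈ s, f j)).Finite := by
  apply Set.Finite.subset (Set.Finite.biUnion s.finite_toSet hf)
  intro a ha
  simp only [Function.mem_support, Finset.sum_apply] at ha
  by_contra h
  simp only [Set.mem_iUnion, Function.mem_support, not_exists, not_not] at h
  exact ha (Finset.sum_eq_zero fun j hj => h j hj)

lemma my_N_sum_le {α ι : Type*} (N : (α → ℝ) → ℝ) (hN0 : N 0 = 0)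
    (hNadd : ∀ f g : α → ℝ, (Function.support f).Finite →
      (Function.support g).Finite → N (f + g) ≤ N f + N g)
    (s : Finset ι) (f : ι → α → ℝ)
    (hf : ∀ j ∈ s, (Function.support (f j)).Finite) :
    N (∑ j ∈ s, f j) ≤ ∑ j ∈ s, N (f j) := by
  classical
  induction s using Finset.cons_induction with
  | empty => simp [hN0]
  | cons a s ha ih =>
    rw [Finset.sum_cons, Finset.sum_cons]
    have h1 : (Function.support (f a)).Finite := hf a (Finset.mem_cons_self a s)
    have h2 : (Function.support (∑ j ∈ s, f j)).Finite :=
      my_support_sum_finite s f (fun j hj => hf j (Finset.mem_cons_of_mem hj))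
    exact le_trans (hNadd _ _ h1 h2)
      (add_le_add_right (ih fun j hj => hf j (Finset.mem_cons_of_mem hj)) _)

theorem stmt_3
    (N : ((Set.Iio (Cardinal.aleph 1).ord : Set Ordinal) → ℝ) → ℝ)
    (hN0 : ∀ x : (Set.Iio (Cardinal.aleph 1).ord : Set Ordinal) → ℝ,
      (Function.support x).Finite → (N x = 0 ↔ x = 0))
    (hNadd : ∀ x y : (Set.Iio (Cardinal.aleph 1).ord : Set Ordinal) → ℝ,
      (Function.support x).Finite → (Function.support y).Finite →
      N (x + y) ≤ N x + N y)
    (hNsmul : ∀ (a : ℝ) (x : (Set.Iio (Cardinal.aleph 1).ord : Set Ordinal) → ℝ),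
      (Function.support x).Finite → N (a • x) = |a| * N x)
    (hNmono : ∀ x : (Set.Iio (Cardinal.aleph 1).ord : Set Ordinal) → ℝ,
      (Function.support x).Finite →
      ∀ I : Set (Set.Iio (Cardinal.aleph 1).ord : Set Ordinal), I.OrdConnected →
        N (I.indicator x) ≤ N x)
    (C : ℝ) (hC : 0 < C) (k : ℕ) (hk : 0 < k)
    (x : Fin k → ((Set.Iio (Cardinal.aleph 1).ord : Set Ordinal) → ℝ))
    (hxfin : ∀ i, (Function.support (x i)).Finite)
    (hxne : ∀ i, x i ≠ 0)
    (hxblock : ∀ i j : Fin k, i < j → ∀ a ∈ Function.support (x i),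
      ∀ b ∈ Function.support (x j), a < b)
    (hxC : ∀ i, N (x i) ≤ C)
    (y : (Set.Iio (Cardinal.aleph 1).ord : Set Ordinal) → ℝ)
    (hy : y = (k : ℝ)⁻¹ • ∑ i, x i)
    (hynorm : N y = 1)
    (l : ℕ) (hl : 0 < l) (hlk : l < k)
    (E : Fin l → Set (Set.Iio (Cardinal.aleph 1).ord : Set Ordinal))
    (hE : ∀ i, (E i).OrdConnected)
    (hEblock : ∀ i j : Fin l, i < j → ∀ a ∈ E i, ∀ b ∈ E j, a < b) :
    ∑ i, N ((E i).indicator y) ≤ C * (1 + 2 * l / k) := by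
  classical
  have hN0' : N 0 = 0 := (hN0 0 (by simp)).2 rfl
  set S : Fin l → Finset (Fin k) :=
    fun i => Finset.univ.filter (fun j => (E i).indicator (x j) ≠ 0) with hS
  have hSmem : ∀ i j, j ∈ S i ↔ ∃ a, a ∈ E i ∧ x j a ≠ 0 := by
    intro i j
    simp only [hS, Finset.mem_filter, Finset.mem_univ, true_and, Ne,
      funext_iff, not_forall]
    constructor
    · rintro ⟨a, ha⟩
      by_cases h : a ∈ E i
      · exact ⟨a, h, by simpa [Set.indicator_of_mem h] using ha⟩
      · simp [Set.indicator_of_notMem h] at ha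
    · rintro ⟨a, ha, hxa⟩
      exact ⟨a, by simp [Set.indicator_of_mem ha, hxa]⟩
  -- each indicator piece has finite support
  have hindfin : ∀ (i : Fin l) (j : Fin k),
      (Function.support ((E i).indicator (x j))).Finite :=
    fun i j => (hxfin j).subset (fun a ha => by
      simp only [Function.mem_support] at ha ⊢
      intro h0
      exact ha (by simp [Set.indicator_apply, h0]))
  -- Step 1
  have step1 : ∀ i, N ((E i).indicator y) ≤ (S i).card * C / k := by
    intro i
    have hy' : (E i).indicator y
        = (k : ℝ)⁻¹ • ∑ j : Fin k, (E i).indicator (x j) := by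
      funext a
      by_cases h : a ∈ E i <;>
        simp [hy, Set.indicator_of_mem, Set.indicator_of_notMem, h,
          Finset.sum_apply, Finset.mul_sum]
    have hsum : ∑ j ∈ S i, (E i).indicator (x j)
        = ∑ j : Fin k, (E i).indicator (x j) :=
      Finset.sum_filter_ne_zero _
    have hfin : (Function.support (∑ j : Fin k, (E i).indicator (x j))).Finite :=
      my_support_sum_finite _ _ (fun j _ => hindfin i j)
    rw [hy', hNsmul _ _ hfin, ← hsum]
    have hle : N (∑ j ∈ S i, (E i).indicator (x j))
        ≤ ∑ j ∈ S i, N ((E i).indicator (x j)) :=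
      my_N_sum_le N hN0' hNadd _ _ (fun j _ => hindfin i j)
    have hle2 : ∑ j ∈ S i, N ((E i).indicator (x j)) ≤ (S i).card * C := by
      calc ∑ j ∈ S i, N ((E i).indicator (x j)) ≤ ∑ j ∈ S i, C :=
            Finset.sum_le_sum fun j _ =>
              le_trans (hNmono (x j) (hxfin j) (E i) (hE i)) (hxC j)
        _ = (S i).card * C := by rw [Finset.sum_const, nsmul_eq_mul]
    have hkpos : (0:ℝ) < k := by exact_mod_cast hk
    rw [abs_of_pos (inv_pos.2 hkpos)]
    calc (k:ℝ)⁻¹ * N (∑ j ∈ S i, (E i).indicator (x j))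
        ≤ (k:ℝ)⁻¹ * ((S i).card * C) := by
          apply mul_le_mul_of_nonneg_left (le_trans hle hle2) (inv_nonneg.2 hkpos.le)
      _ = (S i).card * C / k := by ring
  -- counting lemma : key order facts
  have key : ∀ (i i' : Fin l) (j : Fin k), i < i' → j ∈ S i → j ∈ S i' →
      ∀ j' ∈ S i, j' ≤ j := by
    intro i i' j hii' hji hji' j' hj'
    by_contra hlt
    push_neg at hlt
    obtain ⟨a, ha, hxa⟩ := (hSmem i' j).1 hji'
    obtain ⟨b, hb, hxb⟩ := (hSmem i j').1 hj'
    have h1 : a < b := hxblock j j' hlt a hxa b hxb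
    have h2 : b < a := hEblock i i' hii' b hb a ha
    exact absurd h1 (not_lt.2 h2.le)
  have key' : ∀ (i i' : Fin l) (j : Fin k), i' < i → j ∈ S i → j ∈ S i' →
      ∀ j' ∈ S i, j ≤ j' := by
    intro i i' j hii' hji hji' j' hj'
    by_contra hlt
    push_neg at hlt
    obtain ⟨a, ha, hxa⟩ := (hSmem i' j).1 hji'
    obtain ⟨b, hb, hxb⟩ := (hSmem i j').1 hj'
    have h1 : b < a := hxblock j' j hlt b hxb a hxa
    have h2 : a < b := hEblock i' i hii' a ha b hb
    exact absurd h1 (not_lt.2 h2.le)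
  set T : Fin l → Finset (Fin k) :=
    fun i => (S i).filter (fun j => ∀ i', j ∈ S i' → i' = i) with hT
  have hcard : ∀ i, (S i).card ≤ (T i).card + 2 := by
    intro i
    rcases (S i).eq_empty_or_nonempty with h | h
    · simp [h]
    · have hsub : S i ⊆ insert ((S i).max' h) (insert ((S i).min' h) (T i)) := by
        intro j hj
        by_cases hTj : j ∈ T i
        · exact Finset.mem_insert_of_mem (Finset.mem_insert_of_mem hTj)
        · simp only [hT, Finset.mem_filter, hj, true_and, not_forall] at hTj
          obtain ⟨i', hji', hne⟩ := hTj
          rcases lt_or_gt_of_ne hne with hlt | hgt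
          · -- i' < i : j is the min
            have hjmin : j = (S i).min' h :=
              le_antisymm (key' i i' j hlt hj hji' _ ((S i).min'_mem h))
                (Finset.min'_le _ _ hj)
            rw [hjmin]
            exact Finset.mem_insert_of_mem (Finset.mem_insert_self _ _)
          · -- i < i' : j is the max
            have hjmax : j = (S i).max' h :=
              le_antisymm (Finset.le_max' _ _ hj)
                (key i i' j hgt hj hji' _ ((S i).max'_mem h))
            rw [hjmax]; exact Finset.mem_insert_self _ _
      calc (S i).card ≤ _ := Finset.card_le_card hsub
        _ ≤ (insert ((S i).min' h) (T i)).card + 1 := Finset.card_insert_le _ _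
        _ ≤ (T i).card + 1 + 1 := by
            exact add_le_add_left (Finset.card_insert_le _ _) 1
        _ = (T i).card + 2 := by ring
  have hdisj : ∀ i ∈ (Finset.univ : Finset (Fin l)), ∀ i' ∈ Finset.univ,
      i ≠ i' → Disjoint (T i) (T i') := by
    intro i _ i' _ hne
    rw [Finset.disjoint_left]
    intro j hji hji'
    simp only [hT, Finset.mem_filter] at hji hji'
    exact hne (hji'.2 i hji.1)
  have hTsum : ∑ i, (T i).card ≤ k := by
    calc ∑ i, (T i).card = (Finset.univ.biUnion T).card :=
          (Finset.card_biUnion hdisj).symm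
      _ ≤ (Finset.univ : Finset (Fin k)).card := Finset.card_le_univ _
      _ = k := by simp
  have step2 : ∑ i, (S i).card ≤ k + 2 * l := by
    calc ∑ i, (S i).card ≤ ∑ i, ((T i).card + 2) :=
          Finset.sum_le_sum fun i _ => hcard i
      _ = (∑ i, (T i).card) + 2 * l := by
          rw [Finset.sum_add_distrib, Finset.sum_const, Finset.card_univ]
          simp [mul_comm]
      _ ≤ k + 2 * l := by omega
  -- conclude
  have hkpos : (0:ℝ) < k := by exact_mod_cast hk
  calc ∑ i, N ((E i).indicator y) ≤ ∑ i, ((S i).card * C / k) :=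
        Finset.sum_le_sum fun i _ => step1 i
    _ = (∑ i, ((S i).card : ℝ)) * C / k := by
        rw [← Finset.sum_div, ← Finset.sum_mul]
    _ ≤ ((k : ℝ) + 2 * l) * C / k := by
        have : (∑ i, ((S i).card : ℝ)) ≤ (k : ℝ) + 2 * l := by
          have := step2
          push_cast
          exact_mod_cast this
        gcongr
    _ = C * (1 + 2 * l / k) := by
        field_simp
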